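/- arXiv:2604.07310 — 2 statements merged into one kernel-verified Lean document; each statement's English description precedes it below -/
import Mathlib

section
/- Let Z_UU, Z_ΩΩ ∈ ℝ^{3×3} be symmetric with Z_UU positive definite, Z_UΩ ∈ ℝ^{3×3} arbitrary, and fix a nonzero W ∈ ℝ³. Define P(s, V) := Vᵀ Z_UU V + 2 Vᵀ (s Z_UΩ + Z_UU) W + Wᵀ (s² Z_ΩΩ + 2s Z_UΩ + Z_UU) W. Assume the full matrix [[Z_UU, Z_UΩ],[Z_UΩᵀ, Z_ΩΩ]] is positive definite. Set A_UU := Wᵀ Z_UU⁻¹ W, A_UΩ := Wᵀ Z_UU⁻¹ Z_UΩ W, A_ΩΩ := Wᵀ (Z_ΩΩ − Z_UΩᵀ Z_UU⁻¹ Z_UΩ) W, and D := A_UU A_ΩΩ + A_UΩ². Then the minimizer of P(s, V) over all s ∈ ℝ and V ∈ ℝ³ with Vᵀ W = 0 is given by s* = −|W|² A_UΩ / D and V* = (|W|² A_ΩΩ D⁻¹ Z_UU⁻¹ − s* Z_UU⁻¹ Z_UΩ − I) W, and the minimum value is P(s*, V*) = |W|⁴ A_ΩΩ / D. -/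
open Matrix

private lemma dp_swap {n : Type*} [Fintype n] (A : Matrix n n ℝ) (x y : n → ℝ) :
    (A *ᵥ x) ⬝ᵥ y = x ⬝ᵥ (Aᵀ *ᵥ y) := by
  rw [dotProduct_mulVec, vecMul_transpose]

theorem stmt_5
    (ZUU ZUO ZOO : Matrix (Fin 3) (Fin 3) ℝ)
    (hUU : ZUU.IsSymm) (hOO : ZOO.IsSymm)
    (hZ : (Matrix.fromBlocks ZUU ZUO ZUOᵀ ZOO).PosDef)
    (W : Fin 3 → ℝ) (hW : W ≠ 0)
    (P : ℝ → (Fin 3 → ℝ) → ℝ)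
    (hP : ∀ (s : ℝ) (V : Fin 3 → ℝ),
      P s V = V ⬝ᵥ (ZUU *ᵥ V) + 2 * (V ⬝ᵥ ((s • ZUO + ZUU) *ᵥ W))
        + W ⬝ᵥ (((s ^ 2) • ZOO + (2 * s) • ZUO + ZUU) *ᵥ W))
    (AUU AUO AOO D : ℝ)
    (hAUU : AUU = W ⬝ᵥ (ZUU⁻¹ *ᵥ W))
    (hAUO : AUO = W ⬝ᵥ ((ZUU⁻¹ * ZUO) *ᵥ W))
    (hAOO : AOO = W ⬝ᵥ ((ZOO - ZUOᵀ * ZUU⁻¹ * ZUO) *ᵥ W))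
    (hD : D = AUU * AOO + AUO ^ 2)
    (sstar : ℝ) (Vstar : Fin 3 → ℝ)
    (hs : sstar = -(W ⬝ᵥ W) * AUO / D)
    (hV : Vstar = (((W ⬝ᵥ W) * AOO / D) • ZUU⁻¹
        - sstar • (ZUU⁻¹ * ZUO) - 1) *ᵥ W) :
    Vstar ⬝ᵥ W = 0 ∧
    (∀ (s : ℝ) (V : Fin 3 → ℝ), V ⬝ᵥ W = 0 → P sstar Vstar ≤ P s V) ∧
    P sstar Vstar = (W ⬝ᵥ W) ^ 2 * AOO / D := by
  subst hD
  -- basic positivity facts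
  have hpd : ZUU.PosDef := by
    refine PosDef.of_dotProduct_mulVec_pos (by rw [IsHermitian, conjTranspose_eq_transpose_of_trivial]; exact hUU)
      (fun x hx => ?_)
    have hne : (Sum.elim x 0 : Fin 3 ⊕ Fin 3 → ℝ) ≠ 0 := by
      intro h
      exact hx (funext fun i => congrFun h (Sum.inl i))
    have := hZ.dotProduct_mulVec_pos hne
    simpa [fromBlocks_mulVec, dotProduct] using this
  haveI : Invertible ZUU := invertibleOfIsUnitDet _ hpd.det_pos.ne'.isUnit
  have hdet : IsUnit ZUU.det := hpd.det_pos.ne'.isUnit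
  have hMs : (ZUU⁻¹)ᵀ = ZUU⁻¹ := by rw [transpose_nonsing_inv, hUU.eq]
  have h1 : ZUU * ZUU⁻¹ = 1 := mul_nonsing_inv _ hdet
  have h2 : ZUU⁻¹ * ZUU = 1 := nonsing_inv_mul _ hdet
  have hMpd : (ZUU⁻¹).PosDef := hpd.inv
  have hS : (ZOO - ZUOᵀ * ZUU⁻¹ * ZUO).PosDef := by
    refine PosDef.of_dotProduct_mulVec_pos ?_ ?_
    · have h1' : (ZOO - ZUOᵀ * ZUU⁻¹ * ZUO)ᵀ = ZOO - ZUOᵀ * ZUU⁻¹ * ZUO := by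
        rw [transpose_sub, hOO.eq, transpose_mul, transpose_mul, transpose_transpose, hMs,
          Matrix.mul_assoc]
      rw [IsHermitian, conjTranspose_eq_transpose_of_trivial, h1']
    · intro x hx
      have hne : ((-((ZUU⁻¹ * ZUO) *ᵥ x)) ⊕ᵥ x : Fin 3 ⊕ Fin 3 → ℝ) ≠ 0 := by
        intro h
        exact hx (funext fun i => congrFun h (Sum.inr i))
      have h2' := hZ.dotProduct_mulVec_pos hne
      rw [dotProduct_mulVec] at h2'
      have h3 := schur_complement_eq₁₁ (α := ℝ) ZUO ZOO (-((ZUU⁻¹ * ZUO) *ᵥ x)) x hpd.1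
      rw [conjTranspose_eq_transpose_of_trivial] at h3
      rw [h3, neg_add_cancel] at h2'
      simpa [dotProduct_mulVec] using h2'
  have hu : 0 < AUU := by rw [hAUU]; simpa using hMpd.dotProduct_mulVec_pos hW
  have hO : 0 < AOO := by rw [hAOO]; simpa using hS.dotProduct_mulVec_pos hW
  have hDpos : 0 < AUU * AOO + AUO ^ 2 := by nlinarith [sq_nonneg AUO, mul_pos hu hO]
  -- mulVec simplifications
  have e1 : ZUU *ᵥ (ZUU⁻¹ *ᵥ W) = W := by rw [mulVec_mulVec, h1, one_mulVec]
  have e2 : ZUU *ᵥ ((ZUU⁻¹ * ZUO) *ᵥ W) = ZUO *ᵥ W := by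
    rw [mulVec_mulVec, ← Matrix.mul_assoc, h1, Matrix.one_mul]
  -- dot product table
  have tb3 : ((ZUU⁻¹ * ZUO) *ᵥ W) ⬝ᵥ (ZUO *ᵥ W) = W ⬝ᵥ ((ZUOᵀ * ZUU⁻¹ * ZUO) *ᵥ W) := by
    rw [dp_swap, transpose_mul, hMs, mulVec_mulVec]
  have tb4 : ((ZUU⁻¹ * ZUO) *ᵥ W) ⬝ᵥ (ZUU *ᵥ W) = W ⬝ᵥ (ZUO *ᵥ W) := by
    rw [dotProduct_comm, dp_swap, hUU.eq, e2]
  have tb5 : ((ZUU⁻¹ * ZUO) *ᵥ W) ⬝ᵥ W = AUO := by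
    rw [dotProduct_comm]; exact hAUO.symm
  have tb8 : (ZUU⁻¹ *ᵥ W) ⬝ᵥ (ZUO *ᵥ W) = AUO := by
    rw [dp_swap, hMs, mulVec_mulVec]; exact hAUO.symm
  have tb9 : (ZUU⁻¹ *ᵥ W) ⬝ᵥ (ZUU *ᵥ W) = W ⬝ᵥ W := by
    rw [dp_swap, hMs, mulVec_mulVec, h2, one_mulVec]
  have tb10 : (ZUU⁻¹ *ᵥ W) ⬝ᵥ W = AUU := by
    rw [dotProduct_comm]; exact hAUU.symm
  have hAOO' : AOO = W ⬝ᵥ (ZOO *ᵥ W) - W ⬝ᵥ ((ZUOᵀ * ZUU⁻¹ * ZUO) *ᵥ W) := by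
    rw [hAOO, sub_mulVec, dotProduct_sub]
  -- the key identity
  have key : ∀ (s : ℝ) (V : Fin 3 → ℝ), V ⬝ᵥ W = 0 →
      P s V = (V + (s • ((ZUU⁻¹ * ZUO) *ᵥ W) + W
          + (-(s * AUO + W ⬝ᵥ W) / AUU) • (ZUU⁻¹ *ᵥ W))) ⬝ᵥ
        (ZUU *ᵥ (V + (s • ((ZUU⁻¹ * ZUO) *ᵥ W) + W
          + (-(s * AUO + W ⬝ᵥ W) / AUU) • (ZUU⁻¹ *ᵥ W))))
        + (AOO * s ^ 2 + (s * AUO + W ⬝ᵥ W) ^ 2 / AUU) := by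
    intro s V hVW
    have tb2 : ((ZUU⁻¹ * ZUO) *ᵥ W) ⬝ᵥ (ZUU *ᵥ V) = V ⬝ᵥ (ZUO *ᵥ W) := by
      rw [dotProduct_comm, dp_swap, hUU.eq, e2]
    have tb6 : W ⬝ᵥ (ZUU *ᵥ V) = V ⬝ᵥ (ZUU *ᵥ W) := by
      rw [dotProduct_comm, dp_swap, hUU.eq]
    have tb7 : (ZUU⁻¹ *ᵥ W) ⬝ᵥ (ZUU *ᵥ V) = 0 := by
      rw [dotProduct_comm, dp_swap, hUU.eq, mulVec_mulVec, h1, one_mulVec]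
      exact hVW
    rw [hP]
    simp only [mulVec_add, mulVec_smul, e1, e2, add_mulVec, smul_mulVec,
      dotProduct_add, add_dotProduct, dotProduct_smul, smul_dotProduct, smul_eq_mul,
      tb2, tb3, tb4, tb5, tb6, tb7, tb8, tb9, tb10, hVW, hAOO',
      mul_zero, zero_mul, add_zero, zero_add]
    field_simp
    ring
  -- Vstar as a linear combination
  have hVstar : Vstar = ((W ⬝ᵥ W) * AOO / (AUU * AOO + AUO ^ 2)) • (ZUU⁻¹ *ᵥ W)
      - sstar • ((ZUU⁻¹ * ZUO) *ᵥ W) - W := by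
    rw [hV, sub_mulVec, sub_mulVec, smul_mulVec, smul_mulVec, one_mulVec]
  have part1 : Vstar ⬝ᵥ W = 0 := by
    rw [hVstar]
    simp only [sub_dotProduct, smul_dotProduct, smul_eq_mul, tb10, tb5]
    rw [hs]
    field_simp
    ring
  refine ⟨part1, ?_, ?_⟩
  · -- minimality
    intro s V hVW
    have hlam : (-(sstar * AUO + W ⬝ᵥ W) / AUU)
        = -((W ⬝ᵥ W) * AOO / (AUU * AOO + AUO ^ 2)) := by
      rw [hs]; field_simp; ring
    have hzero : Vstar + (sstar • ((ZUU⁻¹ * ZUO) *ᵥ W) + W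
        + (-(sstar * AUO + W ⬝ᵥ W) / AUU) • (ZUU⁻¹ *ᵥ W)) = 0 := by
      rw [hVstar, hlam]
      module
    rw [key s V hVW, key sstar Vstar part1, hzero]
    simp only [zero_dotProduct, zero_add]
    have hQ : 0 ≤ (V + (s • ((ZUU⁻¹ * ZUO) *ᵥ W) + W
        + (-(s * AUO + W ⬝ᵥ W) / AUU) • (ZUU⁻¹ *ᵥ W))) ⬝ᵥ
        (ZUU *ᵥ (V + (s • ((ZUU⁻¹ * ZUO) *ᵥ W) + W
          + (-(s * AUO + W ⬝ᵥ W) / AUU) • (ZUU⁻¹ *ᵥ W)))) := by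
      simpa using hpd.posSemidef.dotProduct_mulVec_nonneg (V + (s • ((ZUU⁻¹ * ZUO) *ᵥ W) + W
        + (-(s * AUO + W ⬝ᵥ W) / AUU) • (ZUU⁻¹ *ᵥ W)))
    have hg : AOO * sstar ^ 2 + (sstar * AUO + W ⬝ᵥ W) ^ 2 / AUU
        ≤ AOO * s ^ 2 + (s * AUO + W ⬝ᵥ W) ^ 2 / AUU := by
      rw [← sub_nonneg]
      have hid : AOO * s ^ 2 + (s * AUO + W ⬝ᵥ W) ^ 2 / AUU
          - (AOO * sstar ^ 2 + (sstar * AUO + W ⬝ᵥ W) ^ 2 / AUU)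
          = ((AUU * AOO + AUO ^ 2) / AUU) * (s - sstar) ^ 2 := by
        rw [hs]; field_simp; ring
      rw [hid]
      exact mul_nonneg (div_pos hDpos hu).le (sq_nonneg _)
    linarith
  · -- minimum value
    have hlam : (-(sstar * AUO + W ⬝ᵥ W) / AUU)
        = -((W ⬝ᵥ W) * AOO / (AUU * AOO + AUO ^ 2)) := by
      rw [hs]; field_simp; ring
    have hzero : Vstar + (sstar • ((ZUU⁻¹ * ZUO) *ᵥ W) + W
        + (-(sstar * AUO + W ⬝ᵥ W) / AUU) • (ZUU⁻¹ *ᵥ W)) = 0 := by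
      rw [hVstar, hlam]
      module
    rw [key sstar Vstar part1, hzero]
    simp only [zero_dotProduct, zero_add]
    rw [hs]
    field_simp
    ring
end

section
/- Let Z be a symmetric positive definite 6×6 matrix with blocks Z_UU, Z_UΩ, Z_ΩΩ as above and W a unit vector. Then B_UU − B_UΩ²/B_ΩΩ ≥ |W|⁴ A_ΩΩ / D, i.e. the minimum power loss over spinning straight motions (V = 0) is at least the minimum over all helical motions with the same net direction W. -/
open Matrix

theorem stmt_10
    (ZUU ZUO ZOO : Matrix (Fin 3) (Fin 3) ℝ)
    (hZ : (Matrix.fromBlocks ZUU ZUO ZUOᵀ ZOO).PosDef)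
    (W : Fin 3 → ℝ) (hW : W ⬝ᵥ W = 1)
    (BUU BUO BOO : ℝ)
    (hBUU : BUU = W ⬝ᵥ (ZUU *ᵥ W))
    (hBUO : BUO = W ⬝ᵥ (ZUO *ᵥ W))
    (hBOO : BOO = W ⬝ᵥ (ZOO *ᵥ W))
    (AUU AUO AOO D : ℝ)
    (hAUU : AUU = W ⬝ᵥ (ZUU⁻¹ *ᵥ W))
    (hAUO : AUO = W ⬝ᵥ ((ZUU⁻¹ * ZUO) *ᵥ W))
    (hAOO : AOO = W ⬝ᵥ ((ZOO - ZUOᵀ * ZUU⁻¹ * ZUO) *ᵥ W))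
    (hD : D = AUU * AOO + AUO ^ 2) :
    (W ⬝ᵥ W) ^ 2 * AOO / D ≤ BUU - BUO ^ 2 / BOO := by
  classical
  have hZh := hZ.1
  have hZUUh : ZUU.IsHermitian := by
    ext i j
    simpa using congrFun (congrFun hZh (Sum.inl i)) (Sum.inl j)
  have hZUUpd : ZUU.PosDef := by
    refine posDef_iff_dotProduct_mulVec.mpr ⟨hZUUh, fun x hx => ?_⟩
    have hx' : (Sum.elim x (0 : Fin 3 → ℝ)) ≠ 0 :=
      fun h => hx (funext fun i => congrFun h (Sum.inl i))
    have h2 := hZ.dotProduct_mulVec_pos hx'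
    simpa [fromBlocks_mulVec, dotProduct_block] using h2
  have hWne : W ≠ 0 := by
    intro h; rw [h] at hW; simp at hW
  have hdet : IsUnit ZUU.det := (Matrix.isUnit_iff_isUnit_det _).mp hZUUpd.isUnit
  haveI := ZUU.invertibleOfIsUnitDet hdet
  have hmulinv : ZUU * ZUU⁻¹ = 1 := Matrix.mul_nonsing_inv _ hdet
  have hZUUt : ZUUᵀ = ZUU := by
    rw [← conjTranspose_eq_transpose_of_trivial]; exact hZUUh
  have hinvh : (ZUU⁻¹).IsHermitian := hZUUh.inv
  have hinvt : (ZUU⁻¹)ᵀ = ZUU⁻¹ := by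
    rw [← conjTranspose_eq_transpose_of_trivial]; exact hinvh
  have hinvpd : (ZUU⁻¹).PosDef := hZUUpd.inv
  -- swap lemma for symmetric matrices
  have swap : ∀ (M : Matrix (Fin 3) (Fin 3) ℝ), Mᵀ = M →
      ∀ x z : Fin 3 → ℝ, x ⬝ᵥ (M *ᵥ z) = z ⬝ᵥ (M *ᵥ x) := by
    intro M hM x z
    rw [dotProduct_mulVec, ← mulVec_transpose, hM]
    exact dotProduct_comm _ _
  set y : Fin 3 → ℝ := ZUO *ᵥ W with hy
  set u2 : Fin 3 → ℝ := ZUU⁻¹ *ᵥ W with hu2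
  set u3 : Fin 3 → ℝ := ZUU⁻¹ *ᵥ y with hu3
  have f1 : ZUU *ᵥ u2 = W := by rw [hu2, mulVec_mulVec, hmulinv, one_mulVec]
  have f2 : ZUU *ᵥ u3 = y := by rw [hu3, mulVec_mulVec, hmulinv, one_mulVec]
  have hAUO' : AUO = W ⬝ᵥ u3 := by rw [hAUO, hu3, hy, mulVec_mulVec]
  have hAOO' : AOO = BOO - y ⬝ᵥ u3 := by
    rw [hAOO, hBOO, sub_mulVec, dotProduct_sub]
    congr 1
    rw [Matrix.mul_assoc, ← mulVec_mulVec, dotProduct_mulVec, vecMul_transpose,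
      ← Matrix.mulVec_mulVec, ← hy, ← hu3]
  -- positivity of AOO via Schur complement
  have hAOOpos : 0 < AOO := by
    have hv : (Sum.elim (-(((ZUU⁻¹ * ZUO)) *ᵥ W)) W) ≠ 0 :=
      fun h => hWne (funext fun i => congrFun h (Sum.inr i))
    have h2 := hZ.dotProduct_mulVec_pos hv
    have h3 := schur_complement_eq₁₁ (A := ZUU) ZUO ZOO (-((ZUU⁻¹ * ZUO) *ᵥ W)) W hZUUh
    simp only [conjTranspose_eq_transpose_of_trivial, star_trivial, neg_add_cancel,
      zero_vecMul, zero_dotProduct, zero_add] at h3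
    simp only [star_trivial] at h2
    rw [dotProduct_mulVec] at h2
    rw [h3, ← dotProduct_mulVec, ← hAOO] at h2
    exact h2
  have hAUUpos : 0 < AUU := by
    rw [hAUU]
    simpa using hinvpd.dotProduct_mulVec_pos hWne
  have ht : 0 ≤ y ⬝ᵥ u3 := by
    simpa [hu3] using hinvpd.posSemidef.dotProduct_mulVec_nonneg y
  have hBOOpos : 0 < BOO := by nlinarith [hAOO', hAOOpos, ht]
  have hDpos : 0 < D := by rw [hD]; positivity
  -- Gram facts
  have g12 : u2 ⬝ᵥ (ZUU *ᵥ W) = 1 := by rw [swap _ hZUUt, f1, hW]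
  have g13 : u3 ⬝ᵥ (ZUU *ᵥ W) = BUO := by rw [swap _ hZUUt, f2]; exact hBUO.symm
  have g22 : u2 ⬝ᵥ W = AUU := by rw [dotProduct_comm, ← hAUU]
  have g23 : u2 ⬝ᵥ y = AUO := by
    rw [hu2, dotProduct_comm, swap _ hinvt, ← hu3, ← hAUO']
  have g32 : u3 ⬝ᵥ W = AUO := by rw [dotProduct_comm, ← hAUO']
  have g33 : u3 ⬝ᵥ y = BOO - AOO := by
    rw [dotProduct_comm]; rw [hAOO']; ring
  -- the nonnegative quadratic form
  set c1 : ℝ := AUU * BOO with hc1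
  set c2 : ℝ := -(BOO - AUO * BUO) with hc2
  set c3 : ℝ := -(AUU * BUO) with hc3
  set v : Fin 3 → ℝ := c1 • W + c2 • u2 + c3 • u3 with hv
  have hE : 0 ≤ v ⬝ᵥ (ZUU *ᵥ v) := by
    simpa using hZUUpd.posSemidef.dotProduct_mulVec_nonneg v
  have hEexp : v ⬝ᵥ (ZUU *ᵥ v) =
      c1 ^ 2 * BUU + c2 ^ 2 * AUU + c3 ^ 2 * (BOO - AOO)
        + 2 * c1 * c2 + 2 * (c1 * c3) * BUO + 2 * (c2 * c3) * AUO := by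
    rw [hv]
    simp only [mulVec_add, mulVec_smul, f1, f2, dotProduct_add, add_dotProduct,
      dotProduct_smul, smul_dotProduct, smul_eq_mul]
    rw [g12, g13, g22, g23, g32, g33, ← hBUU, hW, ← hBUO]
    ring
  rw [hEexp] at hE
  -- final scalar inequality
  have hN : 0 ≤ (c1 ^ 2 * BUU + c2 ^ 2 * AUU + c3 ^ 2 * (BOO - AOO)
        + 2 * c1 * c2 + 2 * (c1 * c3) * BUO + 2 * (c2 * c3) * AUO) * D
        + AUU * (AUO * BOO - BUO * D) ^ 2 :=
    add_nonneg (mul_nonneg hE hDpos.le) (mul_nonneg hAUUpos.le (sq_nonneg _))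
  have h7 : AUU ^ 2 * BOO * ((BUU * BOO - BUO ^ 2) * D - AOO * BOO) =
      (c1 ^ 2 * BUU + c2 ^ 2 * AUU + c3 ^ 2 * (BOO - AOO)
        + 2 * c1 * c2 + 2 * (c1 * c3) * BUO + 2 * (c2 * c3) * AUO) * D
        + AUU * (AUO * BOO - BUO * D) ^ 2 := by
    rw [hc1, hc2, hc3, hD]; ring
  have haB : 0 < AUU ^ 2 * BOO := by positivity
  have hX : (0:ℝ) ≤ (BUU * BOO - BUO ^ 2) * D - AOO * BOO := by
    refine le_of_mul_le_mul_left ?_ haB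
    rw [mul_zero, h7]; exact hN
  have h4 : AOO * BOO ≤ (BUU * BOO - BUO ^ 2) * D := by linarith
  rw [hW, one_pow, one_mul]
  have h5 : AOO / D ≤ (BUU * BOO - BUO ^ 2) / BOO := by
    rw [div_le_div_iff₀ hDpos hBOOpos]; linarith
  have h6 : (BUU * BOO - BUO ^ 2) / BOO = BUU - BUO ^ 2 / BOO := by
    field_simp
  linarith [h5, h6.symm.le]
end
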